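/- For λ, μ > 0 and integers k ≥ j ≥ 1, the quantity (λμ/(λ+μ)²)^k · ((λ+μ)/λ)^j · (C(2k-j-1, k-1) - C(2k-j-1, k)), summed over k from j to ∞, equals (μ/λ)^j if λ > μ and equals 1 if λ ≤ μ. -/

import Mathlib

open Real Filter Finset

private def Bb (j i : ℕ) : ℝ :=
  ((j + 2 * i - 1).choose (j + i - 1) : ℝ) - ((j + 2 * i - 1).choose (j + i) : ℝ)

private lemma cat_eq (i : ℕ) :
    (catalan i : ℝ) = ((2 * i).choose i : ℝ) - ((2 * i).choose (i + 1) : ℝ) := by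
  have h := succ_mul_catalan_eq_centralBinom i
  rw [Nat.centralBinom] at h
  have h2 := Nat.choose_succ_right_eq (2 * i) i
  rw [show 2 * i - i = i from by omega] at h2
  have hne : ((i : ℝ) + 1) ≠ 0 := by positivity
  apply mul_left_cancel₀ hne
  have h' : ((i : ℝ) + 1) * (catalan i : ℝ) = ((2 * i).choose i : ℝ) := by exact_mod_cast h
  have h2' : ((2 * i).choose (i + 1) : ℝ) * ((i : ℝ) + 1) = ((2 * i).choose i : ℝ) * i := by
    exact_mod_cast h2
  linear_combination h' + h2'

private lemma Bb_one (i : ℕ) : Bb 1 i = (catalan i : ℝ) := by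
  unfold Bb
  rw [show 1 + 2 * i - 1 = 2 * i from by omega, show 1 + i - 1 = i from by omega,
    show 1 + i = i + 1 from by omega, cat_eq]

private lemma Bb_two (i : ℕ) : Bb 2 i = (catalan (i + 1) : ℝ) := by
  unfold Bb
  rw [show 2 + 2 * i - 1 = 2 * i + 1 from by omega, show 2 + i - 1 = i + 1 from by omega,
    show 2 + i = i + 2 from by omega, cat_eq]
  have p1 : (2 * (i + 1)).choose (i + 1) = (2 * i + 1).choose i + (2 * i + 1).choose (i + 1) := by
    rw [show 2 * (i + 1) = (2 * i + 1) + 1 from by omega]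
    exact Nat.choose_succ_succ _ _
  have p2 : (2 * (i + 1)).choose (i + 2) = (2 * i + 1).choose (i + 1) + (2 * i + 1).choose (i + 2) := by
    rw [show 2 * (i + 1) = (2 * i + 1) + 1 from by omega, show i + 2 = (i + 1) + 1 from rfl]
    exact Nat.choose_succ_succ _ _
  have p3 : (2 * i + 1).choose i = (2 * i + 1).choose (i + 1) := by
    rw [← Nat.choose_symm (by omega : i + 1 ≤ 2 * i + 1),
      show 2 * i + 1 - (i + 1) = i from by omega]
  rw [p1, p2, p3]
  push_cast
  ring

private lemma Bb_rec (j i : ℕ) : Bb (j + 2) i = Bb (j + 1) (i + 1) - Bb j (i + 1) := by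
  unfold Bb
  rw [show j + 2 + 2 * i - 1 = j + 2 * i + 1 from by omega,
      show j + 2 + i - 1 = j + i + 1 from by omega,
      show j + 2 + i = j + i + 2 from by omega,
      show j + 1 + 2 * (i + 1) - 1 = j + 2 * i + 2 from by omega,
      show j + 1 + (i + 1) - 1 = j + i + 1 from by omega,
      show j + 1 + (i + 1) = j + i + 2 from by omega,
      show j + 2 * (i + 1) - 1 = j + 2 * i + 1 from by omega,
      show j + (i + 1) - 1 = j + i from by omega,
      show j + (i + 1) = j + i + 1 from by omega]
  have p1 : (j + 2 * i + 2).choose (j + i + 1)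
      = (j + 2 * i + 1).choose (j + i) + (j + 2 * i + 1).choose (j + i + 1) :=
    Nat.choose_succ_succ _ _
  have p2 : (j + 2 * i + 2).choose (j + i + 2)
      = (j + 2 * i + 1).choose (j + i + 1) + (j + 2 * i + 1).choose (j + i + 2) :=
    Nat.choose_succ_succ _ _
  rw [p1, p2]
  push_cast
  ring

private lemma Bb_zero (j : ℕ) (hj : 1 ≤ j) : Bb j 0 = 1 := by
  unfold Bb
  simp only [Nat.mul_zero, Nat.add_zero, Nat.choose_self,
    Nat.choose_eq_zero_of_lt (show j - 1 < j by omega)]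
  norm_num

private lemma cat_key (z : ℝ) (i : ℕ) :
    (catalan (i + 1) : ℝ) * z ^ (i + 1)
      = z * ∑ p ∈ Finset.HasAntidiagonal.antidiagonal i,
          ((catalan p.1 : ℝ) * z ^ p.1) * ((catalan p.2 : ℝ) * z ^ p.2) := by
  rw [catalan_succ']
  push_cast
  rw [Finset.sum_mul, Finset.mul_sum]
  refine Finset.sum_congr rfl fun p hp => ?_
  have hpe : p.1 + p.2 = i := Finset.HasAntidiagonal.mem_antidiagonal.mp hp
  rw [← hpe, pow_add]
  ring

private lemma cat_partial_le (z r : ℝ) (hz : 0 < z) (hr1 : 1 ≤ r) (hroot : z * r ^ 2 = r - 1) :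
    ∀ N, ∑ i ∈ Finset.range N, (catalan i : ℝ) * z ^ i ≤ r := by
  intro N
  induction N with
  | zero => simp; linarith
  | succ N ih =>
    have hnn : (0:ℝ) ≤ ∑ i ∈ Finset.range N, (catalan i : ℝ) * z ^ i := by
      apply Finset.sum_nonneg; intro i _; positivity
    have hdisj : (↑(Finset.range N) : Set ℕ).PairwiseDisjoint Finset.HasAntidiagonal.antidiagonal := by
      intro a _ b _ hab
      rw [Function.onFun, Finset.disjoint_left]
      intro p hpa hpb
      exact hab ((Finset.HasAntidiagonal.mem_antidiagonal.mp hpa) ▸ (Finset.HasAntidiagonal.mem_antidiagonal.mp hpb))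
    have hsq : ∑ i ∈ Finset.range N, ∑ p ∈ Finset.HasAntidiagonal.antidiagonal i,
          ((catalan p.1 : ℝ) * z ^ p.1) * ((catalan p.2 : ℝ) * z ^ p.2)
        ≤ (∑ i ∈ Finset.range N, (catalan i : ℝ) * z ^ i) ^ 2 := by
      rw [← Finset.sum_biUnion hdisj]
      have hsub : (Finset.range N).biUnion Finset.HasAntidiagonal.antidiagonal
          ⊆ Finset.range N ×ˢ Finset.range N := by
        intro p hp
        simp only [Finset.mem_biUnion, Finset.HasAntidiagonal.mem_antidiagonal, Finset.mem_range] at hp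
        obtain ⟨i, hi, he⟩ := hp
        simp only [Finset.mem_product, Finset.mem_range]
        omega
      calc ∑ p ∈ (Finset.range N).biUnion Finset.HasAntidiagonal.antidiagonal,
            ((catalan p.1 : ℝ) * z ^ p.1) * ((catalan p.2 : ℝ) * z ^ p.2)
          ≤ ∑ p ∈ Finset.range N ×ˢ Finset.range N,
            ((catalan p.1 : ℝ) * z ^ p.1) * ((catalan p.2 : ℝ) * z ^ p.2) := by
            apply Finset.sum_le_sum_of_subset_of_nonneg hsub
            intro p _ _; positivity
        _ = (∑ i ∈ Finset.range N, (catalan i : ℝ) * z ^ i) ^ 2 := by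
            rw [sq, Finset.sum_mul_sum, ← Finset.sum_product']
    calc ∑ i ∈ Finset.range (N + 1), (catalan i : ℝ) * z ^ i
        = (∑ i ∈ Finset.range N, (catalan (i + 1) : ℝ) * z ^ (i + 1))
            + (catalan 0 : ℝ) * z ^ 0 := Finset.sum_range_succ' _ _
      _ = z * (∑ i ∈ Finset.range N, ∑ p ∈ Finset.HasAntidiagonal.antidiagonal i,
            ((catalan p.1 : ℝ) * z ^ p.1) * ((catalan p.2 : ℝ) * z ^ p.2)) + 1 := by
          rw [Finset.mul_sum]
          simp only [cat_key, catalan_zero]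
          norm_num
      _ ≤ z * (∑ i ∈ Finset.range N, (catalan i : ℝ) * z ^ i) ^ 2 + 1 := by
          have := mul_le_mul_of_nonneg_left hsq hz.le
          linarith
      _ ≤ z * r ^ 2 + 1 := by
          have h1 : (∑ i ∈ Finset.range N, (catalan i : ℝ) * z ^ i) ^ 2 ≤ r ^ 2 := by
            apply pow_le_pow_left₀ hnn ih
          nlinarith
      _ = r := by linarith

private lemma cat_summable (z r : ℝ) (hz : 0 < z) (hr1 : 1 ≤ r) (hroot : z * r ^ 2 = r - 1) :
    Summable (fun i => (catalan i : ℝ) * z ^ i) :=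
  summable_of_sum_range_le (fun i => by positivity) (cat_partial_le z r hz hr1 hroot)

set_option maxHeartbeats 1000000 in
private lemma cat_tsum (z r : ℝ) (hz : 0 < z) (hz4 : 4 * z ≤ 1) (hr1 : 1 ≤ r) (hr2 : r ≤ 2)
    (hroot : z * r ^ 2 = r - 1) :
    (∑' i, (catalan i : ℝ) * z ^ i) = r := by
  set s := ∑' i, (catalan i : ℝ) * z ^ i with hs_def
  have hsum := cat_summable z r hz hr1 hroot
  have hs_le : s ≤ r :=
    Real.tsum_le_of_sum_range_le (fun i => by positivity) (cat_partial_le z r hz hr1 hroot)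
  have hnorm : Summable (fun i => ‖(catalan i : ℝ) * z ^ i‖) := by
    simpa only [Real.norm_eq_abs] using hsum.abs
  have hmul := tsum_mul_tsum_eq_tsum_sum_antidiagonal_of_summable_norm hnorm hnorm
  have hinner : ∀ n, (∑ kl ∈ Finset.HasAntidiagonal.antidiagonal n,
      ((catalan kl.1 : ℝ) * z ^ kl.1) * ((catalan kl.2 : ℝ) * z ^ kl.2))
      = (catalan (n + 1) : ℝ) * z ^ n := by
    intro n
    apply mul_left_cancel₀ hz.ne'
    rw [← cat_key z n, pow_succ]
    ring
  have hss : s * s = ∑' n, (catalan (n + 1) : ℝ) * z ^ n := by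
    rw [hmul]
    exact tsum_congr hinner
  have hshift : Summable (fun n => (catalan (n + 1) : ℝ) * z ^ (n + 1)) :=
    (summable_nat_add_iff 1).mpr hsum
  have hzero : s = 1 + ∑' n, (catalan (n + 1) : ℝ) * z ^ (n + 1) := by
    rw [hs_def, Summable.tsum_eq_zero_add hsum]
    norm_num
  have hfact : (∑' n, (catalan (n + 1) : ℝ) * z ^ (n + 1))
      = z * ∑' n, (catalan (n + 1) : ℝ) * z ^ n := by
    rw [← tsum_mul_left]
    apply tsum_congr
    intro n
    rw [pow_succ]
    ring
  have hs_eq : z * s ^ 2 = s - 1 := by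
    rw [sq, hss, ← hfact]
    linarith [hzero]
  by_contra hne
  have hlt : s < r := lt_of_le_of_ne hs_le hne
  have h2 : (z * (s + r) - 1) * (s - r) = 0 := by linear_combination hs_eq - hroot
  rcases mul_eq_zero.mp h2 with h3 | h3
  · have : z * (s + r) < 1 := by nlinarith
    linarith [sub_eq_zero.mp h3]
  · exact hne (sub_eq_zero.mp h3)

set_option maxHeartbeats 2000000 in
private lemma gf_eval (z r : ℝ) (hz : 0 < z) (hz4 : 4 * z ≤ 1) (hr1 : 1 ≤ r) (hr2 : r ≤ 2)
    (hroot : z * r ^ 2 = r - 1) :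
    ∀ j : ℕ, (Summable (fun i => Bb (j + 1) i * z ^ i) ∧
        (∑' i, Bb (j + 1) i * z ^ i) = r ^ (j + 1))
      ∧ (Summable (fun i => Bb (j + 2) i * z ^ i) ∧
        (∑' i, Bb (j + 2) i * z ^ i) = r ^ (j + 2)) := by
  have hcs := cat_summable z r hz hr1 hroot
  have hct := cat_tsum z r hz hz4 hr1 hr2 hroot
  have hzne : z ≠ 0 := hz.ne'
  -- base : j = 1
  have h1 : Summable (fun i => Bb 1 i * z ^ i) ∧ (∑' i, Bb 1 i * z ^ i) = r ^ 1 := by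
    constructor
    · exact hcs.congr fun i => by rw [Bb_one]
    · rw [show (∑' i, Bb 1 i * z ^ i) = ∑' i, (catalan i : ℝ) * z ^ i from
        tsum_congr fun i => by rw [Bb_one], hct, pow_one]
  -- shifted catalan sums
  have hshift : Summable (fun n => (catalan (n + 1) : ℝ) * z ^ (n + 1)) :=
    (summable_nat_add_iff 1).mpr hcs
  have hzero : (∑' i, (catalan i : ℝ) * z ^ i)
      = 1 + ∑' n, (catalan (n + 1) : ℝ) * z ^ (n + 1) := by
    rw [Summable.tsum_eq_zero_add hcs]
    norm_num
  have h2 : Summable (fun i => Bb 2 i * z ^ i) ∧ (∑' i, Bb 2 i * z ^ i) = r ^ 2 := by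
    have he : (fun i => Bb 2 i * z ^ i)
        = fun i => (1 / z) * ((catalan (i + 1) : ℝ) * z ^ (i + 1)) := by
      funext i
      rw [Bb_two, pow_succ]
      field_simp
    constructor
    · rw [he]; exact hshift.mul_left _
    · rw [he, tsum_mul_left]
      have : (∑' n, (catalan (n + 1) : ℝ) * z ^ (n + 1)) = r - 1 := by
        linarith [hzero, hct]
      rw [this]
      field_simp
      linear_combination -hroot
  -- inductive step
  intro j
  induction j with
  | zero => exact ⟨h1, h2⟩
  | succ j ih =>
    refine ⟨ih.2, ?_⟩
    obtain ⟨⟨hA, hAt⟩, ⟨hB, hBt⟩⟩ := ih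
    have hAs : Summable (fun i => Bb (j + 1) (i + 1) * z ^ (i + 1)) :=
      (summable_nat_add_iff 1).mpr hA
    have hBs : Summable (fun i => Bb (j + 2) (i + 1) * z ^ (i + 1)) :=
      (summable_nat_add_iff 1).mpr hB
    have he : (fun i => Bb (j + 3) i * z ^ i)
        = fun i => (1 / z) * ((Bb (j + 2) (i + 1) * z ^ (i + 1))
            - (Bb (j + 1) (i + 1) * z ^ (i + 1))) := by
      funext i
      have hr := Bb_rec (j + 1) i
      rw [show j + 1 + 2 = j + 3 from rfl] at hr
      rw [hr, pow_succ]
      field_simp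
    have hAz : (∑' i, Bb (j + 1) (i + 1) * z ^ (i + 1)) = r ^ (j + 1) - 1 := by
      have := Summable.tsum_eq_zero_add hA
      rw [hAt] at this
      rw [Bb_zero (j + 1) (by omega)] at this
      simp at this
      linarith [this]
    have hBz : (∑' i, Bb (j + 2) (i + 1) * z ^ (i + 1)) = r ^ (j + 2) - 1 := by
      have := Summable.tsum_eq_zero_add hB
      rw [hBt] at this
      rw [Bb_zero (j + 2) (by omega)] at this
      simp at this
      linarith [this]
    refine ⟨?_, ?_⟩
    · rw [he]; exact (hBs.sub hAs).mul_left _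
    · rw [he, tsum_mul_left, Summable.tsum_sub hBs hAs, hAz, hBz]
      have : r ^ (j + 2) - 1 - (r ^ (j + 1) - 1) = r ^ (j + 1) * (z * r ^ 2) := by
        rw [hroot]; ring
      rw [this]
      field_simp
      ring

theorem stmt_1 (lam mu : ℝ) (j : ℕ) (hj : 1 ≤ j) (hlam : 0 < lam) (hmu : 0 < mu) :
    (mu < lam →
      (∑' i : ℕ, (lam * mu / (lam + mu) ^ 2) ^ (j + i) * ((lam + mu) / lam) ^ j *
        ((Nat.choose (2 * (j + i) - j - 1) ((j + i) - 1) : ℝ) -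
          (Nat.choose (2 * (j + i) - j - 1) (j + i) : ℝ))) = (mu / lam) ^ j) ∧
    (lam ≤ mu →
      (∑' i : ℕ, (lam * mu / (lam + mu) ^ 2) ^ (j + i) * ((lam + mu) / lam) ^ j *
        ((Nat.choose (2 * (j + i) - j - 1) ((j + i) - 1) : ℝ) -
          (Nat.choose (2 * (j + i) - j - 1) (j + i) : ℝ))) = 1) := by
  have hlm : 0 < lam + mu := by linarith
  have hlamne : lam ≠ 0 := hlam.ne'
  have hmune : mu ≠ 0 := hmu.ne'
  have hlmne : lam + mu ≠ 0 := hlm.ne'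
  set z := lam * mu / (lam + mu) ^ 2 with hzdef
  have hz : 0 < z := by positivity
  have hz4 : 4 * z ≤ 1 := by
    have h4 : 4 * z = 4 * (lam * mu) / (lam + mu) ^ 2 := by rw [hzdef]; ring
    rw [h4, div_le_one (by positivity)]
    nlinarith [sq_nonneg (lam - mu)]
  have key : ∀ r : ℝ, 1 ≤ r → r ≤ 2 → z * r ^ 2 = r - 1 →
      (∑' i : ℕ, z ^ (j + i) * ((lam + mu) / lam) ^ j *
        ((Nat.choose (2 * (j + i) - j - 1) ((j + i) - 1) : ℝ) -
          (Nat.choose (2 * (j + i) - j - 1) (j + i) : ℝ)))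
        = (z * ((lam + mu) / lam) * r) ^ j := by
    intro r hr1 hr2 hroot
    obtain ⟨j', rfl⟩ : ∃ j', j = j' + 1 := ⟨j - 1, by omega⟩
    have hgf := (gf_eval z r hz hz4 hr1 hr2 hroot j').1
    have hterm : ∀ i : ℕ, z ^ (j' + 1 + i) * ((lam + mu) / lam) ^ (j' + 1) *
          ((Nat.choose (2 * (j' + 1 + i) - (j' + 1) - 1) ((j' + 1 + i) - 1) : ℝ) -
            (Nat.choose (2 * (j' + 1 + i) - (j' + 1) - 1) (j' + 1 + i) : ℝ))
        = (z ^ (j' + 1) * ((lam + mu) / lam) ^ (j' + 1)) * (Bb (j' + 1) i * z ^ i) := by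
      intro i
      rw [show 2 * (j' + 1 + i) - (j' + 1) - 1 = j' + 1 + 2 * i - 1 from by omega]
      unfold Bb
      rw [pow_add]
      ring
    rw [tsum_congr hterm, tsum_mul_left, hgf.2, mul_pow, mul_pow]
  constructor
  · intro hml
    have hr1 : 1 ≤ (lam + mu) / lam := by rw [le_div_iff₀ hlam]; linarith
    have hr2 : (lam + mu) / lam ≤ 2 := by rw [div_le_iff₀ hlam]; linarith
    have hroot : z * ((lam + mu) / lam) ^ 2 = (lam + mu) / lam - 1 := by
      rw [hzdef]; field_simp; ring
    rw [key _ hr1 hr2 hroot,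
      show z * ((lam + mu) / lam) * ((lam + mu) / lam) = mu / lam by
        rw [hzdef]; field_simp]
  · intro hlm'
    have hr1 : 1 ≤ (lam + mu) / mu := by rw [le_div_iff₀ hmu]; linarith
    have hr2 : (lam + mu) / mu ≤ 2 := by rw [div_le_iff₀ hmu]; linarith
    have hroot : z * ((lam + mu) / mu) ^ 2 = (lam + mu) / mu - 1 := by
      rw [hzdef]; field_simp; ring
    rw [key _ hr1 hr2 hroot,
      show z * ((lam + mu) / lam) * ((lam + mu) / mu) = 1 by
        rw [hzdef]; field_simp, one_pow]
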